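/- Let G be a locally compact Hausdorff topological group which is unimodular, with Haar measure μ (so μ is a regular Borel measure on G that is both left-invariant and right-invariant, positive on nonempty open sets and finite on compact sets). Let H and K be compact open subgroups of G with H ⊆ K, and suppose there exists g ∈ G with g H g⁻¹ = K. Then H = K. -/

import Mathlib

open MeasureTheory

/-- In a unimodular locally compact Hausdorff group (with a Haar measure
that is both left- and right-invariant), if a compact open subgroup `H` is contained in a
compact open subgroup `K` and some conjugate of `H` equals `K`, then `H = K`. -/
theorem compact_open_subgroup_eq_of_conj_eq
    {G : Type*} [Group G] [TopologicalSpace G] [IsTopologicalGroup G]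
    [LocallyCompactSpace G] [T2Space G] [MeasurableSpace G] [BorelSpace G]
    (μ : Measure G) [μ.IsHaarMeasure] [μ.IsMulRightInvariant] [μ.Regular]
    (H K : Subgroup G) (hHK : H ≤ K)
    (hHcompact : IsCompact (H : Set G)) (hHopen : IsOpen (H : Set G))
    (hKcompact : IsCompact (K : Set G)) (hKopen : IsOpen (K : Set G))
    (g : G) (hg : Subgroup.map (MulAut.conj g).toMonoidHom H = K) :
    H = K := by
  -- μ K = μ H via conjugation invariance
  have hset : (K : Set G) = (· * g⁻¹) '' ((g * ·) '' (H : Set G)) := by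
    ext x
    simp only [SetLike.mem_coe, ← hg, Subgroup.mem_map, Set.mem_image, SetLike.mem_coe]
    constructor
    · rintro ⟨h, hh, rfl⟩
      exact ⟨g * h, ⟨h, hh, rfl⟩, by simp [MulAut.conj_apply, mul_assoc]⟩
    · rintro ⟨y, ⟨h, hh, rfl⟩, rfl⟩
      exact ⟨h, hh, by simp [MulAut.conj_apply, mul_assoc]⟩
  have himg1 : (g * ·) '' (H : Set G) = (g⁻¹ * ·) ⁻¹' (H : Set G) := by
    ext x
    constructor
    · rintro ⟨h, hh, rfl⟩; simpa using hh
    · intro h; exact ⟨g⁻¹ * x, h, by simp⟩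
  have himg2 : ∀ s : Set G, (· * g⁻¹) '' s = (· * g) ⁻¹' s := by
    intro s; ext x; constructor
    · rintro ⟨h, hh, rfl⟩; simpa using hh
    · intro h; exact ⟨x * g, h, by simp⟩
  have hμKH : μ (K : Set G) = μ (H : Set G) := by
    rw [hset, himg2, himg1, measure_preimage_mul_right, measure_preimage_mul]
  have hHfin : μ (H : Set G) < ⊤ := hHcompact.measure_lt_top
  -- suppose H < K, get contradiction
  by_contra hne
  obtain ⟨k, hkK, hkH⟩ : ∃ k, k ∈ K ∧ k ∉ H := by
    by_contra h
    push_neg at h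
    exact hne (le_antisymm hHK h)
  have hdisj : Disjoint ((k * ·) '' (H : Set G)) (H : Set G) := by
    rw [Set.disjoint_left]
    rintro x ⟨h, hh, rfl⟩ hx
    exact hkH (by simpa using mul_mem hx (inv_mem hh))
  have hsub : ((k * ·) '' (H : Set G)) ∪ (H : Set G) ⊆ (K : Set G) := by
    rintro x (⟨h, hh, rfl⟩ | hx)
    · exact mul_mem hkK (hHK hh)
    · exact hHK hx
  have hkHimg : (k * ·) '' (H : Set G) = (k⁻¹ * ·) ⁻¹' (H : Set G) := by
    ext x; constructor
    · rintro ⟨h, hh, rfl⟩; simpa using hh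
    · intro h; exact ⟨k⁻¹ * x, h, by simp⟩
  have hmeas : μ ((k * ·) '' (H : Set G)) = μ (H : Set G) := by
    rw [hkHimg, measure_preimage_mul]
  have hHmeas : MeasurableSet (H : Set G) := hHopen.measurableSet
  have : μ (H : Set G) + μ (H : Set G) ≤ μ (K : Set G) := by
    calc μ (H : Set G) + μ (H : Set G)
        = μ (((k * ·) '' (H : Set G)) ∪ (H : Set G)) := by
          rw [measure_union hdisj hHmeas, hmeas]
      _ ≤ μ (K : Set G) := measure_mono hsub
  rw [hμKH] at this
  have hpos : 0 < μ (H : Set G) :=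
    hHopen.measure_pos μ ⟨1, one_mem H⟩
  exact absurd this (ENNReal.lt_add_right hHfin.ne hpos.ne').not_ge
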